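/- For every integer N ≥ 2, the set 𝒜_N has exactly F_{N+1} elements, where F_n denotes the n-th Fibonacci number (F_1 = F_2 = 1 and F_{n+2} = F_{n+1} + F_n). -/

import Mathlib

/-- Labels `a`, `b`, `c` for the sequences in the collection `𝒜_N`. -/
inductive Label where
  | a : Label
  | b : Label
  | c : Label
deriving DecidableEq

instance instFintypeLabel : Fintype Label :=
  ⟨{Label.a, Label.b, Label.c}, fun x => by cases x <;> simp⟩

/-- A sequence `t = (t_1, …, t_n)` (indexed here by `Fin n`, index `i` standing for
`j = i + 1`) is admissible iff the last label is not `a` and, for `2 ≤ j ≤ N-1`: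
if `t_j = c` then `t_{j-1} = a`, while if `t_j ∈ {a, b}` then `t_{j-1} ∈ {b, c}`.
Here `n = N - 1`. -/
def Admissible {n : ℕ} (t : Fin n → Label) : Prop :=
  (∀ h : 0 < n, t ⟨n - 1, by omega⟩ ≠ Label.a) ∧
  ∀ j : ℕ, ∀ h : j + 1 < n,
    (t ⟨j + 1, h⟩ = Label.c → t ⟨j, by omega⟩ = Label.a) ∧
    (t ⟨j + 1, h⟩ ≠ Label.c → t ⟨j, by omega⟩ ≠ Label.a)

/-- The collection `𝒜_N` (with `n = N - 1` labels per sequence). -/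
noncomputable def AdmSet (n : ℕ) : Finset (Fin n → Label) :=
  haveI := Classical.decPred (Admissible (n := n))
  Finset.univ.filter Admissible

lemma mem_AdmSet {n : ℕ} (t : Fin n → Label) : t ∈ AdmSet n ↔ Admissible t := by
  classical
  simp [AdmSet]

/-- Extend a sequence by one label at the end. -/
def ext1 {n : ℕ} (x : Label) (t : Fin n → Label) : Fin (n + 1) → Label :=
  fun i => if h : (i : ℕ) < n then t ⟨i, h⟩ else x

lemma ext1_lt {n : ℕ} (x : Label) (t : Fin n → Label) (j : ℕ) (h : j < n + 1)
    (hj : j < n) : ext1 x t ⟨j, h⟩ = t ⟨j, hj⟩ := dif_pos hj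

lemma ext1_ge {n : ℕ} (x : Label) (t : Fin n → Label) (j : ℕ) (h : j < n + 1)
    (hj : ¬ j < n) : ext1 x t ⟨j, h⟩ = x := dif_neg hj

lemma ext1_inj {n : ℕ} (x : Label) : Function.Injective (ext1 (n := n) x) := by
  intro s t h
  funext i
  have := congrFun h ⟨(i : ℕ), by omega⟩
  rw [ext1_lt x s (i : ℕ) (by omega) i.isLt, ext1_lt x t (i : ℕ) (by omega) i.isLt] at this
  simpa using this

/-- Appending `b` preserves admissibility (both ways). -/
lemma adm_ext_b {n : ℕ} (t : Fin (n + 1) → Label) :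
    Admissible (ext1 Label.b t) ↔ Admissible t := by
  constructor
  · rintro ⟨_, h2⟩
    refine ⟨?_, ?_⟩
    · intro _
      have hp := (h2 n (by omega)).2
      rw [ext1_ge Label.b t (n + 1) (by omega) (by omega),
        ext1_lt Label.b t n (by omega) (by omega)] at hp
      exact hp (by simp)
    · intro j hj
      have hp := h2 j (by omega)
      rwa [ext1_lt Label.b t (j + 1) (by omega) (by omega),
        ext1_lt Label.b t j (by omega) (by omega)] at hp
  · rintro ⟨h1, h2⟩
    refine ⟨?_, ?_⟩
    · intro _
      rw [ext1_ge Label.b t (n + 1 + 1 - 1) (by omega) (by omega)]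
      simp
    · intro j hj
      by_cases hc : j + 1 < n + 1
      · have hp := h2 j hc
        rw [ext1_lt Label.b t (j + 1) (by omega) hc,
          ext1_lt Label.b t j (by omega) (by omega)]
        exact hp
      · have hjn : j = n := by omega
        subst hjn
        rw [ext1_ge Label.b t (j + 1) (by omega) (by omega),
          ext1_lt Label.b t j (by omega) (by omega)]
        exact ⟨fun h => absurd h (by simp), fun _ => h1 (by omega)⟩

/-- Appending `a` then `c` preserves admissibility (both ways). -/
lemma adm_ext_ac {n : ℕ} (t : Fin n → Label) :
    Admissible (ext1 Label.c (ext1 Label.a t)) ↔ Admissible t := by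
  have e_last : ∀ h : n + 1 < n + 2,
      ext1 Label.c (ext1 Label.a t) ⟨n + 1, h⟩ = Label.c := fun h =>
    ext1_ge Label.c _ (n + 1) h (by omega)
  have e_a : ∀ h : n < n + 2, ext1 Label.c (ext1 Label.a t) ⟨n, h⟩ = Label.a := by
    intro h
    rw [ext1_lt Label.c _ n h (by omega)]
    exact ext1_ge Label.a t n (by omega) (by omega)
  have e_lt : ∀ (j : ℕ) (h : j < n + 2) (hj : j < n),
      ext1 Label.c (ext1 Label.a t) ⟨j, h⟩ = t ⟨j, hj⟩ := by
    intro j h hj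
    rw [ext1_lt Label.c _ j h (by omega)]
    exact ext1_lt Label.a t j (by omega) hj
  constructor
  · rintro ⟨_, h2⟩
    refine ⟨?_, ?_⟩
    · intro hn
      have hp := (h2 (n - 1) (by omega)).2
      have heq : (⟨n - 1 + 1, by omega⟩ : Fin (n + 2)) = ⟨n, by omega⟩ :=
        Fin.ext (show n - 1 + 1 = n by omega)
      rw [heq, e_a, e_lt (n - 1) (by omega) (by omega)] at hp
      exact hp (by simp)
    · intro j hj
      have hp := h2 j (by omega)
      rwa [e_lt (j + 1) (by omega) hj, e_lt j (by omega) (by omega)] at hp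
  · rintro ⟨h1, h2⟩
    refine ⟨?_, ?_⟩
    · intro _
      have heq : (⟨n + 1 + 1 - 1, by omega⟩ : Fin (n + 2)) = ⟨n + 1, by omega⟩ := rfl
      rw [heq, e_last]
      simp
    · intro j hj
      by_cases hc1 : j + 1 < n
      · have hp := h2 j hc1
        rw [e_lt (j + 1) (by omega) hc1, e_lt j (by omega) (by omega)]
        exact hp
      · by_cases hc2 : j + 1 = n
        · subst hc2
          rw [e_a, e_lt j (by omega) (by omega)]
          exact ⟨fun h => absurd h (by simp), fun _ => h1 (by omega)⟩
        · have hjn : j = n := by omega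
          subst hjn
          rw [e_last, e_a]
          exact ⟨fun _ => rfl, fun h => absurd rfl h⟩

/-- Restriction dropping the last label. -/
def restr {n : ℕ} (s : Fin (n + 1) → Label) : Fin n → Label :=
  fun i => s ⟨(i : ℕ), by omega⟩

lemma restr_ext1 {n : ℕ} (s : Fin (n + 1) → Label) (x : Label)
    (hx : s ⟨n, by omega⟩ = x) : ext1 x (restr s) = s := by
  funext i
  by_cases h : (i : ℕ) < n
  · rw [show i = ⟨(i : ℕ), by omega⟩ from rfl, ext1_lt x (restr s) (i : ℕ) (by omega) h]
    rfl
  · have hv : (i : ℕ) = n := by omega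
    have hi : i = ⟨n, by omega⟩ := Fin.ext hv
    rw [hi, ext1_ge x (restr s) n (by omega) (by omega), hx]

lemma card_rec (n : ℕ) :
    (AdmSet (n + 2)).card = (AdmSet (n + 1)).card + (AdmSet n).card := by
  have hset : AdmSet (n + 2) =
      ((AdmSet (n + 1)).image (ext1 Label.b)) ∪
        ((AdmSet n).image (fun t => ext1 Label.c (ext1 Label.a t))) := by
    ext s
    rw [mem_AdmSet, Finset.mem_union, Finset.mem_image, Finset.mem_image]
    constructor
    · intro hs
      obtain ⟨h1, h2⟩ := hs
      have hlast := h1 (by omega)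
      rcases hv : s ⟨n + 1, by omega⟩ with _ | _ | _
      · exact absurd hv hlast
      · left
        refine ⟨restr s, ?_, restr_ext1 s _ hv⟩
        rw [mem_AdmSet, ← adm_ext_b, restr_ext1 s _ hv]
        exact ⟨h1, h2⟩
      · right
        have ha : s ⟨n, by omega⟩ = Label.a := (h2 n (by omega)).1 hv
        refine ⟨restr (restr s), ?_, ?_⟩
        · rw [mem_AdmSet, ← adm_ext_ac,
            restr_ext1 (restr s) Label.a ha, restr_ext1 s Label.c hv]
          exact ⟨h1, h2⟩
        · rw [restr_ext1 (restr s) Label.a ha, restr_ext1 s Label.c hv]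
    · rintro (⟨t, ht, rfl⟩ | ⟨t, ht, rfl⟩)
      · rw [mem_AdmSet] at ht
        exact (adm_ext_b t).2 ht
      · rw [mem_AdmSet] at ht
        exact (adm_ext_ac t).2 ht
  have hinj2 : Function.Injective (fun t : Fin n → Label => ext1 Label.c (ext1 Label.a t)) :=
    fun s t h => ext1_inj Label.a (ext1_inj Label.c h)
  rw [hset, Finset.card_union_of_disjoint, Finset.card_image_of_injective _ (ext1_inj _),
    Finset.card_image_of_injective _ hinj2]
  rw [Finset.disjoint_left]
  intro s hs ht
  rw [Finset.mem_image] at hs ht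
  obtain ⟨t, _, rfl⟩ := hs
  obtain ⟨u, _, hu⟩ := ht
  have h1 : ext1 Label.b t ⟨n + 1, by omega⟩ = Label.b :=
    ext1_ge Label.b t (n + 1) (by omega) (by omega)
  have h2 : ext1 Label.c (ext1 Label.a u) ⟨n + 1, by omega⟩ = Label.c :=
    ext1_ge Label.c _ (n + 1) (by omega) (by omega)
  rw [hu, h1] at h2
  exact Label.noConfusion h2

lemma card_adm0 : (AdmSet 0).card = 1 := by
  rw [Finset.card_eq_one]
  refine ⟨fun i => i.elim0, ?_⟩
  ext t
  rw [mem_AdmSet, Finset.mem_singleton]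
  constructor
  · intro _
    funext i
    exact i.elim0
  · intro _
    exact ⟨fun h => absurd h (by omega), fun j hj => absurd hj (by omega)⟩

lemma card_adm1 : (AdmSet 1).card = 2 := by
  have hs : AdmSet 1 = {fun _ => Label.b, fun _ => Label.c} := by
    ext t
    rw [mem_AdmSet]
    constructor
    · rintro ⟨h1, _⟩
      have h := h1 (by omega)
      have ht : t = fun _ => t ⟨0, by omega⟩ := by
        funext i
        have hv : (i : ℕ) = 0 := by omega
        have hi : i = ⟨0, by omega⟩ := Fin.ext hv
        rw [hi]
      rcases hv : t ⟨0, by omega⟩ with _ | _ | _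
      · exact absurd hv h
      · simp only [Finset.mem_insert, Finset.mem_singleton]
        left; rw [ht, hv]
      · simp only [Finset.mem_insert, Finset.mem_singleton]
        right; rw [ht, hv]
    · intro h
      simp only [Finset.mem_insert, Finset.mem_singleton] at h
      rcases h with rfl | rfl
      · exact ⟨fun _ => by simp, fun j hj => absurd hj (by omega)⟩
      · exact ⟨fun _ => by simp, fun j hj => absurd hj (by omega)⟩
  rw [hs, Finset.card_insert_of_notMem, Finset.card_singleton]
  simp only [Finset.mem_singleton]
  intro h
  have := congrFun h ⟨0, by omega⟩
  exact Label.noConfusion this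

lemma card_adm : ∀ n : ℕ, (AdmSet n).card = Nat.fib (n + 2)
  | 0 => card_adm0
  | 1 => card_adm1
  | (n + 2) => by
      rw [card_rec n, card_adm (n + 1), card_adm n]
      have h1 : Nat.fib (n + 2 + 2) = Nat.fib (n + 2) + Nat.fib (n + 2 + 1) :=
        Nat.fib_add_two
      have h2 : Nat.fib (n + 1 + 2) = Nat.fib (n + 2 + 1) := rfl
      omega

/-- For every `N ≥ 2`, the set `𝒜_N` has exactly `F_{N+1}` elements, where `F` is the
Fibonacci sequence (`Nat.fib` satisfies `F_1 = F_2 = 1` and `F_{n+2} = F_{n+1} + F_n`). -/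
theorem stmt1 (N : ℕ) (hN : 2 ≤ N) : (AdmSet (N - 1)).card = Nat.fib (N + 1) := by
  obtain ⟨n, rfl⟩ : ∃ n, N = n + 2 := ⟨N - 2, by omega⟩
  have h1 : n + 2 - 1 = n + 1 := rfl
  rw [h1, card_adm (n + 1)]
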